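/- The perpendiculars from A, B, C of a triangle ABC onto the sides B₁C₁, C₁A₁, A₁B₁ of its first Brocard triangle are concurrent at a point T (the Tarry point), and T lies on the circumscribed circle of triangle ABC. -/

import Mathlib

open EuclideanGeometry Real Affine
open scoped RealInnerProductSpace

noncomputable section

abbrev Pt := EuclideanSpace ℝ (Fin 2)

open Complex ComplexConjugate

lemma re_zero_of (z : ℂ) (h : z + conj z = 0) : z.re = 0 := by
  have h2 := Complex.add_conj z
  rw [h] at h2
  have h3 : (2:ℝ) * z.re = 0 := by exact_mod_cast h2.symm
  linarith

lemma conj_val {R : ℝ} {a : ℂ} (ha : a * conj a = (R:ℂ)^2) (ha0 : a ≠ 0) :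
    conj a = (R:ℂ)^2 / a := by
  rw [eq_div_iff ha0]; linear_combination ha

lemma vertex (R : ℝ) (b c k a1 : ℂ) (hb0 : b ≠ 0) (hc0 : c ≠ 0) (hbc : b ≠ c)
    (hcjb : conj b = (R:ℂ)^2/b) (hcjc : conj c = (R:ℂ)^2/c)
    (ha1 : (a1 - b) * conj (a1 - b) = (a1 - c) * conj (a1 - c))
    (ha1p : ∃ t : ℝ, k - a1 = (t:ℂ) * (b - c)) :
    conj a1 * (b*c) = (R:ℂ)^2 * a1 ∧ 2 * a1 * (R:ℂ)^2 = k * (R:ℂ)^2 + b * c * conj k := by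
  have hbc' : b - c ≠ 0 := sub_ne_zero.mpr hbc
  simp only [map_sub] at ha1
  rw [hcjb, hcjc] at ha1
  have h1 : conj a1 * (b*c) = (R:ℂ)^2 * a1 := by
    have h2 : (c - b) * (conj a1 * (b*c)) = (c - b) * ((R:ℂ)^2 * a1) := by
      field_simp at ha1
      linear_combination ha1
    exact mul_left_cancel₀ (sub_ne_zero.mpr (Ne.symm hbc)) h2
  refine ⟨h1, ?_⟩
  obtain ⟨t, ht⟩ := ha1p
  have htc : conj k - conj a1 = (t:ℂ) * (conj b - conj c) := by
    simpa [map_sub, Complex.conj_ofReal] using congrArg (starRingEnd ℂ) ht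
  rw [hcjb, hcjc] at htc
  have step : b * c * (conj k - conj a1) = -((t:ℂ) * (R:ℂ)^2 * (b - c)) := by
    rw [htc]; field_simp; ring
  linear_combination -step - (R:ℂ)^2 * ht - h1

lemma key (R : ℝ) (hR : (R:ℂ) ≠ 0) (a b c k a1 b1 c1 : ℂ)
    (ha : a * conj a = (R:ℂ)^2) (hb : b * conj b = (R:ℂ)^2) (hc : c * conj c = (R:ℂ)^2)
    (hab : a ≠ b) (hbc : b ≠ c) (hca : c ≠ a)
    (hk : ((b-c) * conj (b-c)) * (a - k) + ((c-a) * conj (c-a)) * (b - k)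
        + ((a-b) * conj (a-b)) * (c - k) = 0)
    (ha1 : (a1 - b) * conj (a1 - b) = (a1 - c) * conj (a1 - c))
    (ha1p : ∃ t : ℝ, k - a1 = (t:ℂ) * (b - c))
    (hb1 : (b1 - c) * conj (b1 - c) = (b1 - a) * conj (b1 - a))
    (hb1p : ∃ t : ℝ, k - b1 = (t:ℂ) * (c - a))
    (hc1 : (c1 - a) * conj (c1 - a) = (c1 - b) * conj (c1 - b))
    (hc1p : ∃ t : ℝ, k - c1 = (t:ℂ) * (a - b)) :
    ∃ τ : ℂ, (conj (τ - a) * (b1 - c1)).re = 0 ∧ (conj (τ - b) * (c1 - a1)).re = 0 ∧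
      (conj (τ - c) * (a1 - b1)).re = 0 ∧ τ * conj τ = (R:ℂ)^2 := by
  have ha0 : a ≠ 0 := by
    intro h; apply hR; rw [h, zero_mul] at ha
    exact (pow_eq_zero_iff two_ne_zero).mp ha.symm
  have hb0 : b ≠ 0 := by
    intro h; apply hR; rw [h, zero_mul] at hb
    exact (pow_eq_zero_iff two_ne_zero).mp hb.symm
  have hc0 : c ≠ 0 := by
    intro h; apply hR; rw [h, zero_mul] at hc
    exact (pow_eq_zero_iff two_ne_zero).mp hc.symm
  have he3 : a*b*c ≠ 0 := by simp [ha0, hb0, hc0]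
  have hR2 : (2:ℂ)*(R:ℂ)^2 ≠ 0 := mul_ne_zero two_ne_zero (pow_ne_zero 2 hR)
  have hcja := conj_val ha ha0
  have hcjb := conj_val hb hb0
  have hcjc := conj_val hc hc0
  -- conjugation identities for symmetric functions
  have hce3 : conj (a*b*c) * (a*b*c) = (R:ℂ)^6 := by
    simp only [map_mul]
    linear_combination ((conj b*b)*(conj c*c))*ha + (R:ℂ)^2*(conj c*c)*hb + (R:ℂ)^4*hc
  have hcG : conj ((a+b+c)^2 - 3*(a*b+b*c+c*a)) * (a*b*c)^2 = (R:ℂ)^4 * ((a*b+b*c+c*a)^2 - 3*(a+b+c)*(a*b*c)) := by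
    simp only [map_sub, map_add, map_mul, map_pow, map_ofNat]
    linear_combination ((conj a*a + (R:ℂ)^2)*(b*c)^2) * ha + ((conj b*b + (R:ℂ)^2)*(a*c)^2) * hb
      + ((conj c*c + (R:ℂ)^2)*(a*b)^2) * hc
      - (a*b*c^2)*((b*conj b)*ha + (R:ℂ)^2*hb) - (a^2*b*c)*((c*conj c)*hb + (R:ℂ)^2*hc)
      - (a*b^2*c)*((a*conj a)*hc + (R:ℂ)^2*ha)
  have hcH : conj ((a*b+b*c+c*a)^2 - 3*(a+b+c)*(a*b*c)) * (a*b*c)^2 = (R:ℂ)^8 * ((a+b+c)^2 - 3*(a*b+b*c+c*a)) := by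
    simp only [map_sub, map_add, map_mul, map_pow, map_ofNat]
    linear_combination
      (c^2*((b*conj b)^2*(a*conj a + (R:ℂ)^2)))*ha + (c^2*(R:ℂ)^4*(b*conj b + (R:ℂ)^2))*hb
      + (a^2*((c*conj c)^2*(b*conj b + (R:ℂ)^2)))*hb + (a^2*(R:ℂ)^4*(c*conj c + (R:ℂ)^2))*hc
      + (b^2*((a*conj a)^2*(c*conj c + (R:ℂ)^2)))*hc + (b^2*(R:ℂ)^4*(a*conj a + (R:ℂ)^2))*ha
      - (b*c)*((b*conj b)*(c*conj c)*(a*conj a + (R:ℂ)^2)*ha + (R:ℂ)^4*((c*conj c)*hb + (R:ℂ)^2*hc))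
      - (c*a)*((c*conj c)*(a*conj a)*(b*conj b + (R:ℂ)^2)*hb + (R:ℂ)^4*((a*conj a)*hc + (R:ℂ)^2*ha))
      - (a*b)*((a*conj a)*(b*conj b)*(c*conj c + (R:ℂ)^2)*hc + (R:ℂ)^4*((b*conj b)*ha + (R:ℂ)^2*hb))
  have hcE : conj ((a+b+c)*(a*b+b*c+c*a) - 9*(a*b*c)) * (a*b*c)^2 = (R:ℂ)^6 * ((a+b+c)*(a*b+b*c+c*a) - 9*(a*b*c)) := by
    simp only [map_sub, map_add, map_mul, map_pow, map_ofNat]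
    linear_combination
      (b*c^2)*((b*conj b)*(a*conj a + (R:ℂ)^2)*ha + (R:ℂ)^4*hb)
      + (b^2*c)*((c*conj c)*(a*conj a + (R:ℂ)^2)*ha + (R:ℂ)^4*hc)
      + (a^2*c)*((c*conj c)*(b*conj b + (R:ℂ)^2)*hb + (R:ℂ)^4*hc)
      + (a*c^2)*((a*conj a)*(b*conj b + (R:ℂ)^2)*hb + (R:ℂ)^4*ha)
      + (a*b^2)*((a*conj a)*(c*conj c + (R:ℂ)^2)*hc + (R:ℂ)^4*ha)
      + (a^2*b)*((b*conj b)*(c*conj c + (R:ℂ)^2)*hc + (R:ℂ)^4*hb)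
      - (6*a*b*c)*((b*conj b)*(c*conj c)*ha + (R:ℂ)^2*(c*conj c)*hb + (R:ℂ)^4*hc)
  -- symmedian point
  have hkE : k * ((a+b+c)*(a*b+b*c+c*a) - 9*(a*b*c)) = 2 * ((a*b+b*c+c*a)^2 - 3*(a+b+c)*(a*b*c)) := by
    simp only [map_sub] at hk
    have h2 : (R:ℂ)^2 * (k * ((a+b+c)*(a*b+b*c+c*a) - 9*(a*b*c))) = (R:ℂ)^2 * (2 * ((a*b+b*c+c*a)^2 - 3*(a+b+c)*(a*b*c))) := by
      linear_combination (a*b*c) * hk - a*(b-c)*(a-k)*(c*hb - b*hc)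
        - b*(c-a)*(b-k)*(a*hc - c*ha) - c*(a-b)*(c-k)*(b*ha - a*hb)
    exact mul_left_cancel₀ (pow_ne_zero 2 hR) h2
  have hkc : conj k * ((a+b+c)*(a*b+b*c+c*a) - 9*(a*b*c)) = 2*(R:ℂ)^2*((a+b+c)^2 - 3*(a*b+b*c+c*a)) := by
    have h0 : conj k * conj ((a+b+c)*(a*b+b*c+c*a) - 9*(a*b*c)) = 2 * conj ((a*b+b*c+c*a)^2 - 3*(a+b+c)*(a*b*c)) := by
      have h1 := congrArg (starRingEnd ℂ) hkE
      simpa [map_mul, map_ofNat] using h1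
    have h6 : (R:ℂ)^6 * (conj k * ((a+b+c)*(a*b+b*c+c*a) - 9*(a*b*c))) = (R:ℂ)^6 * (2*(R:ℂ)^2*((a+b+c)^2 - 3*(a*b+b*c+c*a))) := by
      linear_combination (a*b*c)^2 * h0 + 2 * hcH - conj k * hcE
    exact mul_left_cancel₀ (pow_ne_zero 6 hR) h6
  -- Brocard vertices
  obtain ⟨hcja1, ha1v⟩ := vertex R b c k a1 hb0 hc0 hbc hcjb hcjc ha1 ha1p
  obtain ⟨hcjb1, hb1v⟩ := vertex R c a k b1 hc0 ha0 hca hcjc hcja hb1 hb1p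
  obtain ⟨hcjc1, hc1v⟩ := vertex R a b k c1 ha0 hb0 hab hcja hcjb hc1 hc1p
  have ha1E : a1 * ((a+b+c)*(a*b+b*c+c*a) - 9*(a*b*c)) = ((a*b+b*c+c*a)^2 - 3*(a+b+c)*(a*b*c)) + b*c*((a+b+c)^2 - 3*(a*b+b*c+c*a)) := by
    have h2 : 2*(R:ℂ)^2 * (a1 * ((a+b+c)*(a*b+b*c+c*a) - 9*(a*b*c))) = 2*(R:ℂ)^2 * (((a*b+b*c+c*a)^2 - 3*(a+b+c)*(a*b*c)) + b*c*((a+b+c)^2 - 3*(a*b+b*c+c*a))) := by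
      linear_combination ((a+b+c)*(a*b+b*c+c*a) - 9*(a*b*c)) * ha1v + (R:ℂ)^2 * hkE + b*c*hkc
    exact mul_left_cancel₀ hR2 h2
  have hb1E : b1 * ((a+b+c)*(a*b+b*c+c*a) - 9*(a*b*c)) = ((a*b+b*c+c*a)^2 - 3*(a+b+c)*(a*b*c)) + c*a*((a+b+c)^2 - 3*(a*b+b*c+c*a)) := by
    have h2 : 2*(R:ℂ)^2 * (b1 * ((a+b+c)*(a*b+b*c+c*a) - 9*(a*b*c))) = 2*(R:ℂ)^2 * (((a*b+b*c+c*a)^2 - 3*(a+b+c)*(a*b*c)) + c*a*((a+b+c)^2 - 3*(a*b+b*c+c*a))) := by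
      linear_combination ((a+b+c)*(a*b+b*c+c*a) - 9*(a*b*c)) * hb1v + (R:ℂ)^2 * hkE + c*a*hkc
    exact mul_left_cancel₀ hR2 h2
  have hc1E : c1 * ((a+b+c)*(a*b+b*c+c*a) - 9*(a*b*c)) = ((a*b+b*c+c*a)^2 - 3*(a+b+c)*(a*b*c)) + a*b*((a+b+c)^2 - 3*(a*b+b*c+c*a)) := by
    have h2 : 2*(R:ℂ)^2 * (c1 * ((a+b+c)*(a*b+b*c+c*a) - 9*(a*b*c))) = 2*(R:ℂ)^2 * (((a*b+b*c+c*a)^2 - 3*(a+b+c)*(a*b*c)) + a*b*((a+b+c)^2 - 3*(a*b+b*c+c*a))) := by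
      linear_combination ((a+b+c)*(a*b+b*c+c*a) - 9*(a*b*c)) * hc1v + (R:ℂ)^2 * hkE + a*b*hkc
    exact mul_left_cancel₀ hR2 h2
  by_cases hG : ((a+b+c)^2 - 3*(a*b+b*c+c*a)) = 0
  · -- equilateral case
    have hH : ((a*b+b*c+c*a)^2 - 3*(a+b+c)*(a*b*c)) = 0 := by
      have h4 := hcG
      rw [hG, map_zero, zero_mul] at h4
      exact (mul_eq_zero.mp h4.symm).resolve_left (pow_ne_zero 4 hR)
    have he1 : a + b + c = 0 := by
      have hfac : (a+b+c) * ((a+b+c)^3 - 27*(a*b*c)) = 0 := by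
        linear_combination 9*hH + ((a+b+c)^2+3*(a*b+b*c+c*a))*hG
      rcases mul_eq_zero.mp hfac with h | h
      · exact h
      · exfalso
        have hcube : (a+b+c)^3 = 27*(a*b*c) := by linear_combination h
        have h3a : (3*a - (a+b+c))^3 = 0 := by
          linear_combination 9*a*hG - hcube
        have h3b : (3*b - (a+b+c))^3 = 0 := by
          linear_combination 9*b*hG - hcube
        have ha' : 3*a - (a+b+c) = 0 := (pow_eq_zero_iff three_ne_zero).mp h3a
        have hb' : 3*b - (a+b+c) = 0 := (pow_eq_zero_iff three_ne_zero).mp h3b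
        exact hab (by linear_combination (ha' - hb')/3)
    have hE0 : ((a+b+c)*(a*b+b*c+c*a) - 9*(a*b*c)) ≠ 0 := by
      intro h
      apply he3
      linear_combination (-(1:ℂ)/9)*h + ((a*b+b*c+c*a)/9)*he1
    have ha1z : a1 = 0 := by
      have h7 : a1 * ((a+b+c)*(a*b+b*c+c*a) - 9*(a*b*c)) = 0 := by rw [ha1E, hH, hG]; ring
      exact (mul_eq_zero.mp h7).resolve_right hE0
    have hb1z : b1 = 0 := by
      have h7 : b1 * ((a+b+c)*(a*b+b*c+c*a) - 9*(a*b*c)) = 0 := by rw [hb1E, hH, hG]; ring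
      exact (mul_eq_zero.mp h7).resolve_right hE0
    have hc1z : c1 = 0 := by
      have h7 : c1 * ((a+b+c)*(a*b+b*c+c*a) - 9*(a*b*c)) = 0 := by rw [hc1E, hH, hG]; ring
      exact (mul_eq_zero.mp h7).resolve_right hE0
    exact ⟨a, by simp [hb1z, hc1z], by simp [hc1z, ha1z], by simp [ha1z, hb1z], ha⟩
  · -- generic case
    have hH0 : ((a*b+b*c+c*a)^2 - 3*(a+b+c)*(a*b*c)) ≠ 0 := by
      intro h
      apply hG
      have h4 := hcH
      rw [h, map_zero, zero_mul] at h4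
      exact (mul_eq_zero.mp h4.symm).resolve_left (pow_ne_zero 8 hR)
    have hE0 : ((a+b+c)*(a*b+b*c+c*a) - 9*(a*b*c)) ≠ 0 := by
      intro h
      apply hH0
      have h5 := hkE
      rw [h, mul_zero] at h5
      linear_combination -h5/2
    have hGE3 : (a*b*c) * ((a+b+c)^2 - 3*(a*b+b*c+c*a)) ≠ 0 := mul_ne_zero he3 hG
    have hτ1 : (-((a*b*c) * ((a+b+c)^2 - 3*(a*b+b*c+c*a)))/((a*b+b*c+c*a)^2 - 3*(a+b+c)*(a*b*c))) * ((a*b+b*c+c*a)^2 - 3*(a+b+c)*(a*b*c)) = -((a*b*c) * ((a+b+c)^2 - 3*(a*b+b*c+c*a))) := div_mul_cancel₀ _ hH0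
    have hτ2 : conj (-((a*b*c) * ((a+b+c)^2 - 3*(a*b+b*c+c*a)))/((a*b+b*c+c*a)^2 - 3*(a+b+c)*(a*b*c))) * ((a*b*c) * ((a+b+c)^2 - 3*(a*b+b*c+c*a))) = -((R:ℂ)^2*((a*b+b*c+c*a)^2 - 3*(a+b+c)*(a*b*c))) := by
      have h0 : conj (-((a*b*c) * ((a+b+c)^2 - 3*(a*b+b*c+c*a)))/((a*b+b*c+c*a)^2 - 3*(a+b+c)*(a*b*c))) * conj ((a*b+b*c+c*a)^2 - 3*(a+b+c)*(a*b*c)) = -(conj (a*b*c) * conj ((a+b+c)^2 - 3*(a*b+b*c+c*a))) := by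
        have h1 := congrArg (starRingEnd ℂ) hτ1
        simpa [map_mul, map_neg] using h1
      have h8 : (R:ℂ)^8 * (conj (-((a*b*c) * ((a+b+c)^2 - 3*(a*b+b*c+c*a)))/((a*b+b*c+c*a)^2 - 3*(a+b+c)*(a*b*c))) * ((a*b*c) * ((a+b+c)^2 - 3*(a*b+b*c+c*a))))
          = (R:ℂ)^8 * (-((R:ℂ)^2*((a*b+b*c+c*a)^2 - 3*(a+b+c)*(a*b*c)))) := by
        linear_combination (-(conj (-((a*b*c) * ((a+b+c)^2 - 3*(a*b+b*c+c*a)))/((a*b+b*c+c*a)^2 - 3*(a+b+c)*(a*b*c))))*(a*b*c)) * hcH + (a*b*c)^3 * h0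
          + (-((a*b*c)^2 * conj ((a+b+c)^2 - 3*(a*b+b*c+c*a)))) * hce3 + (-((R:ℂ)^6)) * hcG
      exact mul_left_cancel₀ (pow_ne_zero 8 hR) h8
    have hd1a : (b1 - c1) * ((a+b+c)*(a*b+b*c+c*a) - 9*(a*b*c)) = a*(c-b)*((a+b+c)^2 - 3*(a*b+b*c+c*a)) := by linear_combination hb1E - hc1E
    have hd2a : (conj b1 - conj c1) * ((a*b*c) * ((a+b+c)*(a*b+b*c+c*a) - 9*(a*b*c))) = (R:ℂ)^2*(b-c)*((a*b+b*c+c*a)^2 - 3*(a+b+c)*(a*b*c)) := by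
      linear_combination ((a+b+c)*(a*b+b*c+c*a) - 9*(a*b*c))*b*hcjb1 - ((a+b+c)*(a*b+b*c+c*a) - 9*(a*b*c))*c*hcjc1 + (R:ℂ)^2*b*hb1E - (R:ℂ)^2*c*hc1E
    have hd1b : (c1 - a1) * ((a+b+c)*(a*b+b*c+c*a) - 9*(a*b*c)) = b*(a-c)*((a+b+c)^2 - 3*(a*b+b*c+c*a)) := by linear_combination hc1E - ha1E
    have hd2b : (conj c1 - conj a1) * ((a*b*c) * ((a+b+c)*(a*b+b*c+c*a) - 9*(a*b*c))) = (R:ℂ)^2*(c-a)*((a*b+b*c+c*a)^2 - 3*(a+b+c)*(a*b*c)) := by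
      linear_combination ((a+b+c)*(a*b+b*c+c*a) - 9*(a*b*c))*c*hcjc1 - ((a+b+c)*(a*b+b*c+c*a) - 9*(a*b*c))*a*hcja1 + (R:ℂ)^2*c*hc1E - (R:ℂ)^2*a*ha1E
    have hd1c : (a1 - b1) * ((a+b+c)*(a*b+b*c+c*a) - 9*(a*b*c)) = c*(b-a)*((a+b+c)^2 - 3*(a*b+b*c+c*a)) := by linear_combination ha1E - hb1E
    have hd2c : (conj a1 - conj b1) * ((a*b*c) * ((a+b+c)*(a*b+b*c+c*a) - 9*(a*b*c))) = (R:ℂ)^2*(a-b)*((a*b+b*c+c*a)^2 - 3*(a+b+c)*(a*b*c)) := by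
      linear_combination ((a+b+c)*(a*b+b*c+c*a) - 9*(a*b*c))*a*hcja1 - ((a+b+c)*(a*b+b*c+c*a) - 9*(a*b*c))*b*hcjb1 + (R:ℂ)^2*a*ha1E - (R:ℂ)^2*b*hb1E
    refine ⟨(-((a*b*c) * ((a+b+c)^2 - 3*(a*b+b*c+c*a)))/((a*b+b*c+c*a)^2 - 3*(a+b+c)*(a*b*c))), ?_, ?_, ?_, ?_⟩
    · apply re_zero_of
      simp only [map_mul, map_sub, Complex.conj_conj]
      have hzM : (a*(a*b*c)*((a+b+c)^2 - 3*(a*b+b*c+c*a))*((a+b+c)*(a*b+b*c+c*a) - 9*(a*b*c))) * ((conj (-((a*b*c) * ((a+b+c)^2 - 3*(a*b+b*c+c*a)))/((a*b+b*c+c*a)^2 - 3*(a+b+c)*(a*b*c))) - conj a) * (b1 - c1)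
          + ((-((a*b*c) * ((a+b+c)^2 - 3*(a*b+b*c+c*a)))/((a*b+b*c+c*a)^2 - 3*(a+b+c)*(a*b*c))) - a) * (conj b1 - conj c1)) = 0 := by
        linear_combination ((conj (-((a*b*c) * ((a+b+c)^2 - 3*(a*b+b*c+c*a)))/((a*b+b*c+c*a)^2 - 3*(a+b+c)*(a*b*c))) - conj a)*a*(a*b*c)*((a+b+c)^2 - 3*(a*b+b*c+c*a))) * hd1a
          + (((-((a*b*c) * ((a+b+c)^2 - 3*(a*b+b*c+c*a)))/((a*b+b*c+c*a)^2 - 3*(a+b+c)*(a*b*c))) - a)*a*((a+b+c)^2 - 3*(a*b+b*c+c*a))) * hd2a + (a*a*(c-b)*((a+b+c)^2 - 3*(a*b+b*c+c*a))) * hτ2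
          + (-((a*b*c)*((a+b+c)^2 - 3*(a*b+b*c+c*a))*((a+b+c)^2 - 3*(a*b+b*c+c*a))*a*(c-b))) * ha + ((R:ℂ)^2*a*((a+b+c)^2 - 3*(a*b+b*c+c*a))*(b-c)) * hτ1
      have hM : (a*(a*b*c)*((a+b+c)^2 - 3*(a*b+b*c+c*a))*((a+b+c)*(a*b+b*c+c*a) - 9*(a*b*c))) ≠ 0 :=
        mul_ne_zero (mul_ne_zero (mul_ne_zero ha0 he3) hG) hE0
      linear_combination (mul_eq_zero.mp hzM).resolve_left hM
    · apply re_zero_of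
      simp only [map_mul, map_sub, Complex.conj_conj]
      have hzM : (b*(a*b*c)*((a+b+c)^2 - 3*(a*b+b*c+c*a))*((a+b+c)*(a*b+b*c+c*a) - 9*(a*b*c))) * ((conj (-((a*b*c) * ((a+b+c)^2 - 3*(a*b+b*c+c*a)))/((a*b+b*c+c*a)^2 - 3*(a+b+c)*(a*b*c))) - conj b) * (c1 - a1)
          + ((-((a*b*c) * ((a+b+c)^2 - 3*(a*b+b*c+c*a)))/((a*b+b*c+c*a)^2 - 3*(a+b+c)*(a*b*c))) - b) * (conj c1 - conj a1)) = 0 := by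
        linear_combination ((conj (-((a*b*c) * ((a+b+c)^2 - 3*(a*b+b*c+c*a)))/((a*b+b*c+c*a)^2 - 3*(a+b+c)*(a*b*c))) - conj b)*b*(a*b*c)*((a+b+c)^2 - 3*(a*b+b*c+c*a))) * hd1b
          + (((-((a*b*c) * ((a+b+c)^2 - 3*(a*b+b*c+c*a)))/((a*b+b*c+c*a)^2 - 3*(a+b+c)*(a*b*c))) - b)*b*((a+b+c)^2 - 3*(a*b+b*c+c*a))) * hd2b + (b*b*(a-c)*((a+b+c)^2 - 3*(a*b+b*c+c*a))) * hτ2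
          + (-((a*b*c)*((a+b+c)^2 - 3*(a*b+b*c+c*a))*((a+b+c)^2 - 3*(a*b+b*c+c*a))*b*(a-c))) * hb + ((R:ℂ)^2*b*((a+b+c)^2 - 3*(a*b+b*c+c*a))*(c-a)) * hτ1
      have hM : (b*(a*b*c)*((a+b+c)^2 - 3*(a*b+b*c+c*a))*((a+b+c)*(a*b+b*c+c*a) - 9*(a*b*c))) ≠ 0 :=
        mul_ne_zero (mul_ne_zero (mul_ne_zero hb0 he3) hG) hE0
      linear_combination (mul_eq_zero.mp hzM).resolve_left hM
    · apply re_zero_of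
      simp only [map_mul, map_sub, Complex.conj_conj]
      have hzM : (c*(a*b*c)*((a+b+c)^2 - 3*(a*b+b*c+c*a))*((a+b+c)*(a*b+b*c+c*a) - 9*(a*b*c))) * ((conj (-((a*b*c) * ((a+b+c)^2 - 3*(a*b+b*c+c*a)))/((a*b+b*c+c*a)^2 - 3*(a+b+c)*(a*b*c))) - conj c) * (a1 - b1)
          + ((-((a*b*c) * ((a+b+c)^2 - 3*(a*b+b*c+c*a)))/((a*b+b*c+c*a)^2 - 3*(a+b+c)*(a*b*c))) - c) * (conj a1 - conj b1)) = 0 := by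
        linear_combination ((conj (-((a*b*c) * ((a+b+c)^2 - 3*(a*b+b*c+c*a)))/((a*b+b*c+c*a)^2 - 3*(a+b+c)*(a*b*c))) - conj c)*c*(a*b*c)*((a+b+c)^2 - 3*(a*b+b*c+c*a))) * hd1c
          + (((-((a*b*c) * ((a+b+c)^2 - 3*(a*b+b*c+c*a)))/((a*b+b*c+c*a)^2 - 3*(a+b+c)*(a*b*c))) - c)*c*((a+b+c)^2 - 3*(a*b+b*c+c*a))) * hd2c + (c*c*(b-a)*((a+b+c)^2 - 3*(a*b+b*c+c*a))) * hτ2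
          + (-((a*b*c)*((a+b+c)^2 - 3*(a*b+b*c+c*a))*((a+b+c)^2 - 3*(a*b+b*c+c*a))*c*(b-a))) * hc + ((R:ℂ)^2*c*((a+b+c)^2 - 3*(a*b+b*c+c*a))*(a-b)) * hτ1
      have hM : (c*(a*b*c)*((a+b+c)^2 - 3*(a*b+b*c+c*a))*((a+b+c)*(a*b+b*c+c*a) - 9*(a*b*c))) ≠ 0 :=
        mul_ne_zero (mul_ne_zero (mul_ne_zero hc0 he3) hG) hE0
      linear_combination (mul_eq_zero.mp hzM).resolve_left hM
    · exact mul_left_cancel₀ (mul_ne_zero hH0 hGE3) (by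
        linear_combination (conj (-((a*b*c) * ((a+b+c)^2 - 3*(a*b+b*c+c*a)))/((a*b+b*c+c*a)^2 - 3*(a+b+c)*(a*b*c)))*((a*b*c)*((a+b+c)^2 - 3*(a*b+b*c+c*a))))*hτ1 + (-((a*b*c)*((a+b+c)^2 - 3*(a*b+b*c+c*a))))*hτ2)


def cm (x : Pt) : ℂ := ⟨x 0, x 1⟩
def gm (z : ℂ) : Pt := (WithLp.equiv 2 _).symm ![z.re, z.im]

lemma cm_add (x y : Pt) : cm (x + y) = cm x + cm y := by
  simp [cm, Complex.ext_iff]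
lemma cm_sub (x y : Pt) : cm (x - y) = cm x - cm y := by
  simp [cm, Complex.ext_iff]
lemma cm_zero : cm (0 : Pt) = 0 := by simp [cm, Complex.ext_iff]
lemma cm_smul (r : ℝ) (x : Pt) : cm (r • x) = (r : ℂ) * cm x := by
  simp [cm, Complex.ext_iff]
lemma cm_gm (z : ℂ) : cm (gm z) = z := by
  simp [cm, gm, Complex.ext_iff]
lemma cm_inner (x y : Pt) : (inner ℝ x y : ℝ) = (conj (cm x) * cm y).re := by
  simp [cm, PiLp.inner_apply, Fin.sum_univ_two, RCLike.inner_apply, Complex.mul_re]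
  ring
lemma cm_dist (x y : Pt) : (dist x y)^2 = Complex.normSq (cm x - cm y) := by
  rw [EuclideanSpace.dist_eq, Real.sq_sqrt (by positivity)]
  simp [cm, Fin.sum_univ_two, Real.dist_eq, sq_abs, Complex.normSq_apply]
  ring

lemma cast_dist (X Y : Pt) : ((dist X Y ^2 : ℝ) : ℂ) = (cm X - cm Y) * conj (cm X - cm Y) := by
  rw [Complex.mul_conj, cm_dist X Y]


/-- The perpendiculars from `A, B, C` to the sides `B₁C₁, C₁A₁, A₁B₁` of the first
Brocard triangle are concurrent at a point `T` (the Tarry point), and `T` lies on the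
circumcircle of `ABC`. -/
theorem stmt_15 (A B C O K A₁ B₁ C₁ : Pt)
    (hABC : AffineIndependent ℝ ![A, B, C])
    (hK : (dist B C) ^ 2 • (A -ᵥ K) + (dist C A) ^ 2 • (B -ᵥ K) + (dist A B) ^ 2 • (C -ᵥ K)
          = (0 : Pt))
    (hA₁ : A₁ ∈ AffineSubspace.perpBisector B C) (hA₁p : ∃ t : ℝ, K -ᵥ A₁ = t • (B -ᵥ C))
    (hB₁ : B₁ ∈ AffineSubspace.perpBisector C A) (hB₁p : ∃ t : ℝ, K -ᵥ B₁ = t • (C -ᵥ A))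
    (hC₁ : C₁ ∈ AffineSubspace.perpBisector A B) (hC₁p : ∃ t : ℝ, K -ᵥ C₁ = t • (A -ᵥ B))
    (hO1 : dist O A = dist O B) (hO2 : dist O B = dist O C) :
    ∃ T : Pt, inner ℝ (T -ᵥ A) (B₁ -ᵥ C₁) = (0 : ℝ) ∧
      inner ℝ (T -ᵥ B) (C₁ -ᵥ A₁) = (0 : ℝ) ∧
      inner ℝ (T -ᵥ C) (A₁ -ᵥ B₁) = (0 : ℝ) ∧
      dist O T = dist O A := by
  have hAB : A ≠ B := fun h =>
    absurd (hABC.injective (show ![A,B,C] 0 = ![A,B,C] 1 by simpa using h)) (by decide)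
  have hBC : B ≠ C := fun h =>
    absurd (hABC.injective (show ![A,B,C] 1 = ![A,B,C] 2 by simpa using h)) (by decide)
  have hCA : C ≠ A := fun h =>
    absurd (hABC.injective (show ![A,B,C] 2 = ![A,B,C] 0 by simpa using h)) (by decide)
  set R : ℝ := dist O A with hR_def
  have hR : (R:ℂ) ≠ 0 := by
    simp only [Ne, Complex.ofReal_eq_zero]
    intro h
    have hOA : O = A := by rwa [hR_def, dist_eq_zero] at h
    have : dist O B = 0 := by rw [← hO1, ← h]
    rw [dist_eq_zero] at this
    exact hAB (hOA ▸ this ▸ rfl)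
  have hcmAB : cm A - cm O ≠ cm B - cm O := by
    intro h
    apply hAB
    have : cm A = cm B := by linear_combination h
    have h0 := congrArg Complex.re this
    have h1 := congrArg Complex.im this
    simp only [cm] at h0 h1
    ext i
    fin_cases i <;> assumption
  have hcmBC : cm B - cm O ≠ cm C - cm O := by
    intro h
    apply hBC
    have : cm B = cm C := by linear_combination h
    have h0 := congrArg Complex.re this
    have h1 := congrArg Complex.im this
    simp only [cm] at h0 h1
    ext i
    fin_cases i <;> assumption
  have hcmCA : cm C - cm O ≠ cm A - cm O := by
    intro h
    apply hCA
    have : cm C = cm A := by linear_combination h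
    have h0 := congrArg Complex.re this
    have h1 := congrArg Complex.im this
    simp only [cm] at h0 h1
    ext i
    fin_cases i <;> assumption
  have hdsq : ∀ X Y : Pt, dist O X = dist O Y →
      (cm X - cm O) * conj (cm X - cm O) = (R:ℂ)^2 → True := fun _ _ _ _ => trivial
  have hnorm : ∀ X : Pt, dist O X = R → (cm X - cm O) * conj (cm X - cm O) = (R:ℂ)^2 := by
    intro X hX
    have h0 : ((dist X O ^2 : ℝ) : ℂ) = (cm X - cm O) * conj (cm X - cm O) := cast_dist X O
    rw [dist_comm, hX] at h0
    rw [← h0]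
    push_cast
    ring
  have ha := hnorm A rfl
  have hb := hnorm B hO1.symm
  have hc := hnorm C (hO1 ▸ hO2.symm ▸ rfl)
  have hk : (((cm B - cm O)-(cm C - cm O)) * conj ((cm B - cm O)-(cm C - cm O))) * ((cm A - cm O) - (cm K - cm O))
      + (((cm C - cm O)-(cm A - cm O)) * conj ((cm C - cm O)-(cm A - cm O))) * ((cm B - cm O) - (cm K - cm O))
      + (((cm A - cm O)-(cm B - cm O)) * conj ((cm A - cm O)-(cm B - cm O))) * ((cm C - cm O) - (cm K - cm O)) = 0 := by
    simp only [vsub_eq_sub] at hK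
    have h0 := congrArg cm hK
    rw [cm_add, cm_add, cm_smul, cm_smul, cm_smul, cm_sub, cm_sub, cm_sub, cm_zero] at h0
    rw [Complex.ofReal_pow, Complex.ofReal_pow, Complex.ofReal_pow] at h0
    have e1 : ((dist B C : ℝ) : ℂ)^2 = (cm B - cm C) * conj (cm B - cm C) := by
      rw [← cast_dist B C]; push_cast; ring
    have e2 : ((dist C A : ℝ) : ℂ)^2 = (cm C - cm A) * conj (cm C - cm A) := by
      rw [← cast_dist C A]; push_cast; ring
    have e3 : ((dist A B : ℝ) : ℂ)^2 = (cm A - cm B) * conj (cm A - cm B) := by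
      rw [← cast_dist A B]; push_cast; ring
    rw [e1, e2, e3] at h0
    simp only [map_sub] at h0 ⊢
    linear_combination h0
  have hperp : ∀ X Y Z : Pt, dist X Y = dist X Z →
      ((cm X - cm O) - (cm Y - cm O)) * conj ((cm X - cm O) - (cm Y - cm O))
      = ((cm X - cm O) - (cm Z - cm O)) * conj ((cm X - cm O) - (cm Z - cm O)) := by
    intro X Y Z h
    have h1 : ((dist X Y ^2 : ℝ) : ℂ) = ((dist X Z ^2 : ℝ) : ℂ) := by rw [h]
    rw [cast_dist, cast_dist] at h1
    simp only [map_sub] at h1 ⊢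
    linear_combination h1
  have hpar : ∀ (X Y Z : Pt), (∃ t : ℝ, K -ᵥ X = t • (Y -ᵥ Z)) →
      ∃ t : ℝ, (cm K - cm O) - (cm X - cm O) = (t:ℂ) * ((cm Y - cm O) - (cm Z - cm O)) := by
    rintro X Y Z ⟨t, ht⟩
    refine ⟨t, ?_⟩
    simp only [vsub_eq_sub] at ht
    have h0 := congrArg cm ht
    rw [cm_sub, cm_smul, cm_sub] at h0
    linear_combination h0
  obtain ⟨τ, h1, h2, h3, h4⟩ := key R hR (cm A - cm O) (cm B - cm O) (cm C - cm O)
    (cm K - cm O) (cm A₁ - cm O) (cm B₁ - cm O) (cm C₁ - cm O) ha hb hc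
    hcmAB hcmBC hcmCA hk
    (hperp A₁ B C (AffineSubspace.mem_perpBisector_iff_dist_eq.mp hA₁))
    (hpar A₁ B C hA₁p)
    (hperp B₁ C A (AffineSubspace.mem_perpBisector_iff_dist_eq.mp hB₁))
    (hpar B₁ C A hB₁p)
    (hperp C₁ A B (AffineSubspace.mem_perpBisector_iff_dist_eq.mp hC₁))
    (hpar C₁ A B hC₁p)
  refine ⟨O + gm τ, ?_, ?_, ?_, ?_⟩
  · rw [show (O + gm τ) -ᵥ A = (O + gm τ) - A from rfl, show B₁ -ᵥ C₁ = B₁ - C₁ from rfl,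
      cm_inner, cm_sub, cm_sub, cm_add, cm_gm]
    rw [show conj (cm O + τ - cm A) * (cm B₁ - cm C₁)
        = conj (τ - (cm A - cm O)) * ((cm B₁ - cm O) - (cm C₁ - cm O)) from by ring_nf]
    exact h1
  · rw [show (O + gm τ) -ᵥ B = (O + gm τ) - B from rfl, show C₁ -ᵥ A₁ = C₁ - A₁ from rfl,
      cm_inner, cm_sub, cm_sub, cm_add, cm_gm]
    rw [show conj (cm O + τ - cm B) * (cm C₁ - cm A₁)
        = conj (τ - (cm B - cm O)) * ((cm C₁ - cm O) - (cm A₁ - cm O)) from by ring_nf]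
    exact h2
  · rw [show (O + gm τ) -ᵥ C = (O + gm τ) - C from rfl, show A₁ -ᵥ B₁ = A₁ - B₁ from rfl,
      cm_inner, cm_sub, cm_sub, cm_add, cm_gm]
    rw [show conj (cm O + τ - cm C) * (cm A₁ - cm B₁)
        = conj (τ - (cm C - cm O)) * ((cm A₁ - cm O) - (cm B₁ - cm O)) from by ring_nf]
    exact h3
  · have hsq : dist O (O + gm τ) ^ 2 = R ^ 2 := by
      rw [cm_dist, cm_add, cm_gm]
      have h5 : ((Complex.normSq (cm O - (cm O + τ)) : ℝ) : ℂ) = ((R^2 : ℝ) : ℂ) := by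
        rw [← Complex.mul_conj]
        push_cast
        rw [show cm O - (cm O + τ) = -τ from by ring]
        rw [show -τ * conj (-τ) = τ * conj τ from by rw [map_neg]; ring]
        rw [h4]
      exact_mod_cast h5
    rw [← Real.sqrt_sq (dist_nonneg (x := O) (y := O + gm τ)), hsq,
      Real.sqrt_sq (by rw [hR_def]; exact dist_nonneg)]
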